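/- arXiv:2303.15158 — 2 statements merged into one kernel-verified Lean document; each statement's English description precedes it below -/
import Mathlib

section
/- For the standard normal upper tail function Q, for every t ≥ 0, Q(t) ≥ 2(2π)^{-1/2} exp(-t^2/2) / (t + sqrt(t^2 + 4)). -/
open Real MeasureTheory Filter Set

/-- The upper tail function of the standard normal distribution. -/
noncomputable def gaussQ (t : ℝ) : ℝ :=
  ∫ x in Set.Ioi t, Real.exp (-x ^ 2 / 2) / Real.sqrt (2 * Real.pi)

noncomputable def phiSW (x : ℝ) : ℝ := Real.exp (-x ^ 2 / 2) / Real.sqrt (2 * Real.pi)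

lemma phiSW_cont : Continuous phiSW :=
  (Real.continuous_exp.comp (by continuity)).div_const _

lemma phiSW_integrable : Integrable phiSW := by
  have h1 := (integrable_exp_neg_mul_sq (b := 1/2) (by norm_num)).div_const
    (Real.sqrt (2 * Real.pi))
  have : ∀ x : ℝ, -x ^ 2 / 2 = -(1/2) * x ^ 2 := fun x => by ring
  have : phiSW = fun x => Real.exp (-(1/2) * x ^ 2) / Real.sqrt (2 * Real.pi) := by
    funext x; rw [phiSW]; congr 1; ring
  rw [this]; exact h1

lemma gaussQ_eq (t : ℝ) : gaussQ t = gaussQ 0 - ∫ x in (0:ℝ)..t, phiSW x := by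
  have key : ∀ a b : ℝ, a ≤ b → gaussQ a = (∫ x in a..b, phiSW x) + gaussQ b := by
    intro a b hab
    rw [intervalIntegral.integral_of_le hab]
    have hsplit : Set.Ioc a b ∪ Set.Ioi b = Set.Ioi a := Set.Ioc_union_Ioi_eq_Ioi hab
    have := setIntegral_union (s := Set.Ioc a b) (t := Set.Ioi b)
      (Set.Ioc_disjoint_Ioi le_rfl) measurableSet_Ioi
      phiSW_integrable.integrableOn phiSW_integrable.integrableOn (μ := volume) (f := phiSW)
    rw [hsplit] at this
    exact this
  rcases le_total 0 t with h | h
  · rw [key 0 t h]; ring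
  · rw [key t 0 h, intervalIntegral.integral_symm]; ring

lemma hasDerivAt_gaussQ (t : ℝ) : HasDerivAt gaussQ (-phiSW t) t := by
  have h : HasDerivAt (fun u => ∫ x in (0:ℝ)..u, phiSW x) (phiSW t) t :=
    intervalIntegral.integral_hasDerivAt_right
      phiSW_integrable.intervalIntegrable
      (phiSW_cont.stronglyMeasurableAtFilter _ _) phiSW_cont.continuousAt
  have h2 : HasDerivAt (fun u => gaussQ 0 - ∫ x in (0:ℝ)..u, phiSW x) (0 - phiSW t) t :=
    (hasDerivAt_const t (gaussQ 0)).sub h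
  rw [show gaussQ = fun u => gaussQ 0 - ∫ x in (0:ℝ)..u, phiSW x from funext gaussQ_eq]
  simpa using h2

/-- Szarek–Werner lower bound on the Gaussian tail. -/
theorem stmt_3 (t : ℝ) (ht : 0 ≤ t) :
    2 * (Real.sqrt (2 * Real.pi))⁻¹ * Real.exp (-t ^ 2 / 2) / (t + Real.sqrt (t ^ 2 + 4))
      ≤ gaussQ t := by
  set c : ℝ := (Real.sqrt (2 * Real.pi))⁻¹ with hc
  have hcpos : 0 < c := by
    rw [hc]
    exact inv_pos.mpr (Real.sqrt_pos.mpr (by positivity))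
  set G : ℝ → ℝ := fun u => 2 * c * Real.exp (-u ^ 2 / 2) / (u + Real.sqrt (u ^ 2 + 4)) with hG
  set F : ℝ → ℝ := fun u => gaussQ u - G u with hF
  -- basic facts about s u = sqrt (u^2+4)
  have hspos : ∀ u : ℝ, 0 < Real.sqrt (u ^ 2 + 4) := fun u =>
    Real.sqrt_pos.mpr (by positivity)
  have hs2 : ∀ u : ℝ, Real.sqrt (u ^ 2 + 4) ^ 2 = u ^ 2 + 4 := fun u =>
    Real.sq_sqrt (by positivity)
  have hle : ∀ u : ℝ, u < Real.sqrt (u ^ 2 + 4) := by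
    intro u
    nlinarith [hspos u, hs2 u, abs_nonneg u, sq_abs u, le_abs_self u]
  have hupos : ∀ u : ℝ, 0 < u + Real.sqrt (u ^ 2 + 4) := by
    intro u; nlinarith [hle u, hspos u, hs2 u, sq_nonneg (u + Real.sqrt (u ^ 2 + 4))]
  -- derivative of G
  have hGderiv : ∀ u : ℝ, HasDerivAt G
      (((2 * c * (Real.exp (-u ^ 2 / 2) * (-u))) * (u + Real.sqrt (u ^ 2 + 4))
        - (2 * c * Real.exp (-u ^ 2 / 2)) * (1 + u / Real.sqrt (u ^ 2 + 4)))
        / (u + Real.sqrt (u ^ 2 + 4)) ^ 2) u := by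
    intro u
    have he : HasDerivAt (fun v : ℝ => Real.exp (-v ^ 2 / 2))
        (Real.exp (-u ^ 2 / 2) * (-u)) u := by
      have h1 : HasDerivAt (fun v : ℝ => -v ^ 2 / 2) (-u) u := by
        have h2 := ((hasDerivAt_pow 2 u).neg.div_const 2)
        have h3 : HasDerivAt (fun x : ℝ => -x ^ 2 / 2) (-(2 * u) / 2) u := by simpa using h2
        convert h3 using 1; ring
      exact h1.exp
    have hsq : HasDerivAt (fun v : ℝ => v ^ 2 + 4) (2 * u) u := by
      simpa using (hasDerivAt_pow 2 u).add_const 4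
    have hs : HasDerivAt (fun v : ℝ => Real.sqrt (v ^ 2 + 4))
        (u / Real.sqrt (u ^ 2 + 4)) u := by
      have := (Real.hasDerivAt_sqrt (by positivity : (u:ℝ) ^ 2 + 4 ≠ 0)).comp u hsq
      refine this.congr_deriv ?_
      ring
    have hu : HasDerivAt (fun v : ℝ => v + Real.sqrt (v ^ 2 + 4))
        (1 + u / Real.sqrt (u ^ 2 + 4)) u := (hasDerivAt_id u).add hs
    exact ((he.const_mul (2 * c)).div hu (hupos u).ne')
  -- derivative of F and its sign
  have hFderiv : ∀ u : ℝ, HasDerivAt F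
      (-phiSW u - (((2 * c * (Real.exp (-u ^ 2 / 2) * (-u))) * (u + Real.sqrt (u ^ 2 + 4))
        - (2 * c * Real.exp (-u ^ 2 / 2)) * (1 + u / Real.sqrt (u ^ 2 + 4)))
        / (u + Real.sqrt (u ^ 2 + 4)) ^ 2)) u := fun u =>
    (hasDerivAt_gaussQ u).sub (hGderiv u)
  have hFderiv_nonpos : ∀ u : ℝ,
      (-phiSW u - (((2 * c * (Real.exp (-u ^ 2 / 2) * (-u))) * (u + Real.sqrt (u ^ 2 + 4))
        - (2 * c * Real.exp (-u ^ 2 / 2)) * (1 + u / Real.sqrt (u ^ 2 + 4)))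
        / (u + Real.sqrt (u ^ 2 + 4)) ^ 2)) ≤ 0 := by
    intro u
    set s := Real.sqrt (u ^ 2 + 4) with hsdef
    set e := Real.exp (-u ^ 2 / 2) with hedef
    have hepos : 0 < e := Real.exp_pos _
    have hphi : phiSW u = e * c := by
      rw [phiSW, div_eq_mul_inv, hc]
    have key : -phiSW u - (((2 * c * (e * (-u))) * (u + s)
        - (2 * c * e) * (1 + u / s)) / (u + s) ^ 2)
        = -(2 * e * c * (s - u)) / (s * (u + s) ^ 2) := by
      rw [hphi]
      have h1 : s ≠ 0 := (hspos u).ne'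
      have h2 : u + s ≠ 0 := (hupos u).ne'
      field_simp
      linear_combination (-s) * hs2 u
    rw [key]
    have : 0 ≤ 2 * e * c * (s - u) :=
      (mul_pos (mul_pos (mul_pos two_pos hepos) hcpos)
        (show (0:ℝ) < s - u by linarith [hle u])).le
    have hden : 0 < s * (u + s) ^ 2 := mul_pos (hspos u) (pow_pos (hupos u) 2)
    exact div_nonpos_of_nonpos_of_nonneg (by linarith) hden.le
  have hFanti : Antitone F :=
    antitone_of_deriv_nonpos (fun u => (hFderiv u).differentiableAt) fun u => by
      rw [(hFderiv u).deriv]; exact hFderiv_nonpos u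
  -- limit of F at infinity is 0
  have hQlim : Tendsto gaussQ atTop (nhds 0) := by
    have h1 : Tendsto (fun u => ∫ x in (0:ℝ)..u, phiSW x) atTop
        (nhds (∫ x in Set.Ioi (0:ℝ), phiSW x)) :=
      intervalIntegral_tendsto_integral_Ioi 0 phiSW_integrable.integrableOn tendsto_id
    have h2 : Tendsto (fun u => gaussQ 0 - ∫ x in (0:ℝ)..u, phiSW x) atTop
        (nhds (gaussQ 0 - ∫ x in Set.Ioi (0:ℝ), phiSW x)) :=
      tendsto_const_nhds.sub h1
    have h3 : gaussQ 0 - ∫ x in Set.Ioi (0:ℝ), phiSW x = 0 := by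
      rw [gaussQ]; simp only [phiSW, sub_self]
    rw [show gaussQ = fun u => gaussQ 0 - ∫ x in (0:ℝ)..u, phiSW x from funext gaussQ_eq]
    rw [h3] at h2
    exact h2
  have hGlim : Tendsto G atTop (nhds 0) := by
    have hexp : Tendsto (fun u : ℝ => Real.exp (-u ^ 2 / 2)) atTop (nhds 0) := by
      apply Real.tendsto_exp_atBot.comp
      have h : Tendsto (fun u : ℝ => u ^ 2 / 2) atTop atTop :=
        (tendsto_pow_atTop (by norm_num)).atTop_div_const (by norm_num)
      have := tendsto_neg_atTop_atBot.comp h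
      simpa [Function.comp_def, neg_div] using this
    apply squeeze_zero' (g := fun u : ℝ => c * Real.exp (-u ^ 2 / 2))
    · filter_upwards with u
      have := (hupos u).le
      positivity
    · filter_upwards [eventually_ge_atTop (0:ℝ)] with u hu
      have hu2 : 2 ≤ u + Real.sqrt (u ^ 2 + 4) := by
        have : (2:ℝ) ≤ Real.sqrt (u ^ 2 + 4) := by
          rw [show (2:ℝ) = Real.sqrt 4 by rw [show (4:ℝ) = 2^2 by norm_num, Real.sqrt_sq]; norm_num]
          exact Real.sqrt_le_sqrt (by nlinarith)
        linarith
      rw [hG, div_le_iff₀ (hupos u)]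
      have h0 : 0 ≤ c * Real.exp (-u ^ 2 / 2) := by positivity
      nlinarith [Real.exp_pos (-u ^ 2 / 2)]
    · simpa using hexp.const_mul c
  have hFlim : Tendsto F atTop (nhds 0) := by
    simpa using hQlim.sub hGlim
  -- conclude
  have h0 : (0:ℝ) ≤ F t := by
    apply le_of_tendsto hFlim
    filter_upwards [eventually_ge_atTop t] with b hb
    exact hFanti hb
  have hfin : G t ≤ gaussQ t := by
    have h1 := h0
    simp only [hF] at h1
    linarith
  simpa [hG] using hfin
end

section
/- Let Σ, Σ̂ be symmetric d×d matrices with λ_min(Σ) ≥ γ > 0, and let S ⊆ {1,…,d} with |S| = s. Then for every nonzero δ ∈ ℝ^d in the cone {‖δ_{S^c}‖_1 ≤ 3‖δ_S‖_1}, δᵀ Σ̂ δ / ‖δ‖_2^2 ≥ γ - 16 s ‖Σ̂ - Σ‖_max. -/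
open Finset Matrix

/-- Restricted eigenvalue bound: for `δ` in the cone, the Rayleigh quotient of `Σ̂` is at least
`γ - 16 s ‖Σ̂ - Σ‖_max`, where `λ_min(Σ) ≥ γ > 0`. -/
theorem stmt_8 {d : ℕ} (Sig SigHat : Matrix (Fin d) (Fin d) ℝ)
    (hSig : Sig.IsHermitian) (hSigHat : SigHat.IsHermitian)
    (γ : ℝ) (hγ : 0 < γ) (hmin : ∀ i, γ ≤ hSig.eigenvalues i)
    (S : Finset (Fin d)) (s : ℕ) (hs : S.card = s)
    (δ : Fin d → ℝ) (hδ : δ ≠ 0)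
    (hcone : ∑ j ∈ Sᶜ, |δ j| ≤ 3 * ∑ j ∈ S, |δ j|) :
    γ - 16 * (s : ℝ) * (⨆ i, ⨆ j, |SigHat i j - Sig i j|)
      ≤ (δ ⬝ᵥ (SigHat *ᵥ δ)) / ∑ j, δ j ^ 2 := by
  classical
  obtain ⟨i₀, hi₀⟩ : ∃ i, δ i ≠ 0 := Function.ne_iff.mp hδ
  set E : Matrix (Fin d) (Fin d) ℝ := SigHat - Sig with hE
  set Mx : ℝ := ⨆ i, ⨆ j, |SigHat i j - Sig i j| with hMx
  have hbdd : ∀ i j, |E i j| ≤ Mx := by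
    intro i j
    have h1 : |SigHat i j - Sig i j| ≤ ⨆ j, |SigHat i j - Sig i j| :=
      le_ciSup (f := fun j => |SigHat i j - Sig i j|)
        (Set.Finite.bddAbove (Set.finite_range _)) j
    exact h1.trans (le_ciSup (f := fun i => ⨆ j, |SigHat i j - Sig i j|)
      (Set.Finite.bddAbove (Set.finite_range _)) i)
  have hMx0 : 0 ≤ Mx := le_trans (abs_nonneg _) (hbdd i₀ i₀)
  set N : ℝ := ∑ j, δ j ^ 2 with hN
  have hsq : 0 < δ i₀ ^ 2 := by positivity
  have hN0 : 0 < N :=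
    lt_of_lt_of_le hsq
      (Finset.single_le_sum (f := fun j => δ j ^ 2) (fun j _ => sq_nonneg _)
        (Finset.mem_univ i₀))
  set L : ℝ := ∑ j, |δ j| with hL
  have hL0 : 0 ≤ L := Finset.sum_nonneg fun _ _ => abs_nonneg _
  have hLsplit : L = (∑ j ∈ S, |δ j|) + ∑ j ∈ Sᶜ, |δ j| :=
    (Finset.sum_add_sum_compl S _).symm
  have hS0 : 0 ≤ ∑ j ∈ S, |δ j| := Finset.sum_nonneg fun _ _ => abs_nonneg _
  have hL4 : L ≤ 4 * ∑ j ∈ S, |δ j| := by rw [hLsplit]; linarith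
  have hSsq : (∑ j ∈ S, |δ j|) ^ 2 ≤ (s : ℝ) * N := by
    calc (∑ j ∈ S, |δ j|) ^ 2 ≤ (S.card : ℝ) * ∑ j ∈ S, |δ j| ^ 2 :=
          sq_sum_le_card_mul_sum_sq
      _ = (s : ℝ) * ∑ j ∈ S, δ j ^ 2 := by rw [hs]; simp [sq_abs]
      _ ≤ (s : ℝ) * N := by
          apply mul_le_mul_of_nonneg_left _ (by positivity)
          exact Finset.sum_le_sum_of_subset_of_nonneg (Finset.subset_univ S)
            (fun _ _ _ => sq_nonneg _)
  have hL2 : L * L ≤ 16 * ((s : ℝ) * N) := by nlinarith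
  -- cross term bound
  have habs : |δ ⬝ᵥ (E *ᵥ δ)| ≤ Mx * L * L := by
    have hrow : ∀ i, |∑ j, E i j * δ j| ≤ Mx * L := by
      intro i
      calc |∑ j, E i j * δ j| ≤ ∑ j, |E i j * δ j| := Finset.abs_sum_le_sum_abs _ _
        _ ≤ ∑ j, Mx * |δ j| := by
            apply Finset.sum_le_sum
            intro j _
            rw [abs_mul]
            exact mul_le_mul_of_nonneg_right (hbdd i j) (abs_nonneg _)
        _ = Mx * L := by rw [hL, Finset.mul_sum]
    calc |δ ⬝ᵥ (E *ᵥ δ)| = |∑ i, δ i * ∑ j, E i j * δ j| := by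
          simp [dotProduct, mulVec, dotProduct]
      _ ≤ ∑ i, |δ i * ∑ j, E i j * δ j| := Finset.abs_sum_le_sum_abs _ _
      _ ≤ ∑ i, |δ i| * (Mx * L) := by
          apply Finset.sum_le_sum
          intro i _
          rw [abs_mul]
          exact mul_le_mul_of_nonneg_left (hrow i) (abs_nonneg _)
      _ = L * (Mx * L) := by rw [hL, Finset.sum_mul]
      _ = Mx * L * L := by ring
  -- Rayleigh bound
  set U : Matrix (Fin d) (Fin d) ℝ := (hSig.eigenvectorUnitary : Matrix (Fin d) (Fin d) ℝ)
    with hU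
  have hUU : U * star U = 1 := Matrix.mem_unitaryGroup_iff.mp hSig.eigenvectorUnitary.2
  have key : Sig - γ • (1 : Matrix (Fin d) (Fin d) ℝ) =
      U * diagonal (fun i => hSig.eigenvalues i - γ) * star U := by
    have h1 := hSig.spectral_theorem
    rw [Unitary.conjStarAlgAut_apply, ← hU] at h1
    have h2 : γ • (1 : Matrix (Fin d) (Fin d) ℝ) = U * (γ • 1) * star U := by
      rw [mul_smul_comm, smul_mul_assoc, mul_one, hUU]
    have h3 : diagonal (RCLike.ofReal ∘ hSig.eigenvalues) -
        γ • (1 : Matrix (Fin d) (Fin d) ℝ) =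
        diagonal (fun i => hSig.eigenvalues i - γ) := by
      ext i j
      by_cases h : i = j <;> simp [diagonal, Matrix.one_apply, h]
    calc Sig - γ • (1 : Matrix (Fin d) (Fin d) ℝ)
        = U * diagonal (RCLike.ofReal ∘ hSig.eigenvalues) * star U - U * (γ • 1) * star U := by
          rw [← h1, ← h2]
      _ = U * (diagonal (RCLike.ofReal ∘ hSig.eigenvalues) - γ • 1) * star U := by
          rw [Matrix.mul_sub, Matrix.sub_mul]
      _ = _ := by rw [h3]
  have hpsd : (Sig - γ • (1 : Matrix (Fin d) (Fin d) ℝ)).PosSemidef := by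
    rw [key]
    exact (Matrix.posSemidef_diagonal_iff.mpr fun i => sub_nonneg.mpr (hmin i))
      |>.mul_mul_conjTranspose_same U
  have hray : γ * N ≤ δ ⬝ᵥ (Sig *ᵥ δ) := by
    have h0 := hpsd.dotProduct_mulVec_nonneg δ
    have h1 : star δ = δ := by simp
    rw [h1, Matrix.sub_mulVec, dotProduct_sub, Matrix.smul_mulVec,
      Matrix.one_mulVec, dotProduct_smul] at h0
    have h2 : δ ⬝ᵥ δ = N := by
      simp [dotProduct, hN, sq]
    rw [h2] at h0
    simpa [smul_eq_mul] using sub_nonneg.mp h0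
  -- assemble
  rw [le_div_iff₀ hN0]
  have expand : δ ⬝ᵥ (SigHat *ᵥ δ) = δ ⬝ᵥ (Sig *ᵥ δ) + δ ⬝ᵥ (E *ᵥ δ) := by
    rw [hE, Matrix.sub_mulVec, dotProduct_sub]
    ring
  have hEb : -(Mx * L * L) ≤ δ ⬝ᵥ (E *ᵥ δ) := neg_le_of_abs_le habs
  have hmul : Mx * (L * L) ≤ Mx * (16 * ((s : ℝ) * N)) :=
    mul_le_mul_of_nonneg_left hL2 hMx0
  rw [expand]
  nlinarith [hray, hEb, hmul]
end
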